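/- Let 𝒫_t(Z,Z') = exp(−(π/2)⟨(−J₀J_t)(Z−Z'),(Z−Z')⟩ − π i Ω(Z,Z')) for Z,Z' ∈ ℝ^{2n}. Then the composed kernel (𝒫_t 𝒫_0)(Z,Z') = ∫_{ℝ^{2n}} 𝒫_t(Z,W) 𝒫_0(W,Z') dW equals det(A_t^0)^{1/2} · exp(−π[⟨Π_0^t(Z−Z'),(Z−Z')⟩ + i Ω(Z,Z')]), where A_t^0 = (½(Id+(−J₀J_t)))^{-1} and Π_0^t is the projection onto V_0^{(1,0)} with kernel V_t^{(0,1)}. -/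

import Mathlib

open Matrix MeasureTheory

noncomputable section

/-- Standard complex structure on ℝ^{2n}: J₀ e_{2k} = e_{2k+1}, J₀ e_{2k+1} = -e_{2k}. -/
def J0 (n : ℕ) : Matrix (Fin (2*n)) (Fin (2*n)) ℝ :=
  Matrix.of fun i j =>
    if (i : ℕ) = (j : ℕ) + 1 ∧ (j : ℕ) % 2 = 0 then 1
    else if (j : ℕ) = (i : ℕ) + 1 ∧ (i : ℕ) % 2 = 0 then -1 else 0

/-- Standard symplectic form Ω(u,v) = ⟨J₀ u, v⟩. -/
def Omega (n : ℕ) (u v : Fin (2*n) → ℝ) : ℝ := (J0 n *ᵥ u) ⬝ᵥ v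

/-- A complex structure J compatible with Ω: J² = -Id, Ω is J-invariant,
and ⟨·,·⟩_J := Ω(·, J·) is positive definite. -/
def Compatible (n : ℕ) (J : Matrix (Fin (2*n)) (Fin (2*n)) ℝ) : Prop :=
  J * J = -1 ∧ (∀ u v, Omega n (J *ᵥ u) (J *ᵥ v) = Omega n u v) ∧
    ∀ v : Fin (2*n) → ℝ, v ≠ 0 → 0 < Omega n v (J *ᵥ v)

/-- Complexification of a real matrix. -/
def mc {m : ℕ} (M : Matrix (Fin m) (Fin m) ℝ) : Matrix (Fin m) (Fin m) ℂ :=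
  M.map (fun x => (x : ℂ))

/-- Complexification of a real vector. -/
def vc {m : ℕ} (v : Fin m → ℝ) : Fin m → ℂ := fun i => (v i : ℂ)

/-- Projection P^{(1,0)} = ½(Id - iK) onto the +i eigenspace of K. -/
def P10 {n : ℕ} (K : Matrix (Fin (2*n)) (Fin (2*n)) ℝ) : Matrix (Fin (2*n)) (Fin (2*n)) ℂ :=
  (1/2 : ℂ) • (1 - Complex.I • mc K)

/-- Projection P^{(0,1)} = ½(Id + iK) onto the -i eigenspace of K. -/
def P01 {n : ℕ} (K : Matrix (Fin (2*n)) (Fin (2*n)) ℝ) : Matrix (Fin (2*n)) (Fin (2*n)) ℂ :=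
  (1/2 : ℂ) • (1 + Complex.I • mc K)

/-- `Amat n K J = (½(Id + (-K)·J))⁻¹`; so `Amat n (J0 n) J` is A_t^0 and
`Amat n J (J0 n)` is A_0^t. -/
def Amat (n : ℕ) (K J : Matrix (Fin (2*n)) (Fin (2*n)) ℝ) : Matrix (Fin (2*n)) (Fin (2*n)) ℝ :=
  ((1/2 : ℝ) • (1 + (-K) * J))⁻¹

/-- Π_t^0 = A_t^0 · P₀^{(1,0)}, the projection onto V_t^{(1,0)} with kernel V₀^{(0,1)}. -/
def PiT0 (n : ℕ) (J : Matrix (Fin (2*n)) (Fin (2*n)) ℝ) : Matrix (Fin (2*n)) (Fin (2*n)) ℂ :=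
  mc (Amat n (J0 n) J) * P10 (J0 n)

/-- Π_0^t = A_0^t · P_t^{(1,0)}, the projection onto V₀^{(1,0)} with kernel V_t^{(0,1)}. -/
def Pi0T (n : ℕ) (J : Matrix (Fin (2*n)) (Fin (2*n)) ℝ) : Matrix (Fin (2*n)) (Fin (2*n)) ℂ :=
  mc (Amat n J (J0 n)) * P10 J

/-- Model Bergman kernel 𝒫_J(Z,Z') = exp(-(π/2)⟨(-J₀J)(Z-Z'),Z-Z'⟩ - πiΩ(Z,Z')). -/
def Pker (n : ℕ) (J : Matrix (Fin (2*n)) (Fin (2*n)) ℝ) (Z Z' : Fin (2*n) → ℝ) : ℂ :=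
  Complex.exp (-(Real.pi : ℂ)/2 * Complex.ofReal ((((-(J0 n)) * J) *ᵥ (Z - Z')) ⬝ᵥ (Z - Z'))
    - (Real.pi : ℂ) * Complex.I * Complex.ofReal (Omega n Z Z'))

/-- Closed formula for the composed kernel (𝒫_t𝒫_0)(Z,Z'). -/
def PtP0form (n : ℕ) (J : Matrix (Fin (2*n)) (Fin (2*n)) ℝ) (Z Z' : Fin (2*n) → ℝ) : ℂ :=
  Complex.ofReal (Real.sqrt (Amat n (J0 n) J).det) *
    Complex.exp (-(Real.pi : ℂ) *
      ((Pi0T n J *ᵥ (vc Z - vc Z')) ⬝ᵥ (vc Z - vc Z')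
        + Complex.I * Complex.ofReal (Omega n Z Z')))

-- complexification API
lemma mc_eq {m : ℕ} (M : Matrix (Fin m) (Fin m) ℝ) : mc M = M.map ⇑Complex.ofRealHom := rfl

lemma vc_eq {m : ℕ} (v : Fin m → ℝ) : vc v = ⇑Complex.ofRealHom ∘ v := rfl

lemma mc_mul {m : ℕ} (M N : Matrix (Fin m) (Fin m) ℝ) : mc (M * N) = mc M * mc N := by
  simp only [mc_eq]; exact Matrix.map_mul

lemma mc_one {m : ℕ} : mc (1 : Matrix (Fin m) (Fin m) ℝ) = 1 :=
  Matrix.map_one _ Complex.ofReal_zero Complex.ofReal_one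

lemma mc_add {m : ℕ} (M N : Matrix (Fin m) (Fin m) ℝ) : mc (M + N) = mc M + mc N := by
  ext i j; simp [mc]

lemma mc_neg {m : ℕ} (M : Matrix (Fin m) (Fin m) ℝ) : mc (-M) = -(mc M) := by
  ext i j; simp [mc]

lemma mc_smul {m : ℕ} (c : ℝ) (M : Matrix (Fin m) (Fin m) ℝ) :
    mc (c • M) = (c : ℂ) • mc M := by
  ext i j; simp [mc]

lemma mc_transpose {m : ℕ} (M : Matrix (Fin m) (Fin m) ℝ) : mc (Mᵀ) = (mc M)ᵀ := by
  ext i j; simp [mc]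

lemma vc_mulVec {m : ℕ} (M : Matrix (Fin m) (Fin m) ℝ) (v : Fin m → ℝ) :
    vc (M *ᵥ v) = mc M *ᵥ vc v := by
  funext i; exact RingHom.map_mulVec Complex.ofRealHom M v i

lemma ofReal_dot {m : ℕ} (u v : Fin m → ℝ) :
    ((u ⬝ᵥ v : ℝ) : ℂ) = vc u ⬝ᵥ vc v :=
  RingHom.map_dotProduct Complex.ofRealHom u v

lemma vc_sub {m : ℕ} (u v : Fin m → ℝ) : vc (u - v) = vc u - vc v := by
  funext i; simp [vc]

-- dot product move lemma
lemma mdot {m : ℕ} {R : Type*} [CommRing R] (M : Matrix (Fin m) (Fin m) R) (u v : Fin m → R) :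
    (M *ᵥ u) ⬝ᵥ v = (Mᵀ *ᵥ v) ⬝ᵥ u := by
  rw [dotProduct_comm, Matrix.dotProduct_mulVec, ← Matrix.mulVec_transpose]

lemma matrix_ext_dot {m : ℕ} {P Q : Matrix (Fin m) (Fin m) ℝ}
    (h : ∀ u v, (P *ᵥ u) ⬝ᵥ v = (Q *ᵥ u) ⬝ᵥ v) : P = Q := by
  ext i j
  have := h (Pi.single j 1) (Pi.single i 1)
  simpa [Matrix.mulVec_single, dotProduct_single] using this

-- J0 lemmas
lemma J0_mul_J0 (n : ℕ) : J0 n * J0 n = -1 := by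
  ext i j
  rw [Matrix.mul_apply, Matrix.neg_apply, Matrix.one_apply]
  rcases Nat.even_or_odd (i : ℕ) with he | ho
  · rw [Nat.even_iff] at he
    have h1 : (i : ℕ) + 1 < 2 * n := by have := i.isLt; omega
    rw [Finset.sum_eq_single (⟨(i : ℕ) + 1, h1⟩ : Fin (2*n))]
    · simp only [J0, Matrix.of_apply, Fin.ext_iff, true_and, and_true]
      split_ifs <;> first | omega | norm_num
    · intro k _ hk
      have hkv : (k : ℕ) ≠ (i : ℕ) + 1 := fun h => hk (Fin.ext h)
      simp only [J0, Matrix.of_apply, Fin.ext_iff, true_and, and_true]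
      split_ifs <;> first | omega | norm_num
    · intro h; exact absurd (Finset.mem_univ _) h
  · rw [Nat.odd_iff] at ho
    have h1 : (i : ℕ) - 1 < 2 * n := by have := i.isLt; omega
    rw [Finset.sum_eq_single (⟨(i : ℕ) - 1, h1⟩ : Fin (2*n))]
    · simp only [J0, Matrix.of_apply, Fin.ext_iff, true_and, and_true]
      split_ifs <;> first | omega | norm_num
    · intro k _ hk
      have hkv : (k : ℕ) ≠ (i : ℕ) - 1 := fun h => hk (Fin.ext h)
      simp only [J0, Matrix.of_apply, Fin.ext_iff, true_and, and_true]
      split_ifs <;> first | omega | norm_num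
    · intro h; exact absurd (Finset.mem_univ _) h

lemma J0_transpose (n : ℕ) : (J0 n)ᵀ = -(J0 n) := by
  ext i j
  simp only [Matrix.transpose_apply, Matrix.neg_apply, J0, Matrix.of_apply]
  split_ifs <;> first | omega | norm_num


-- The multidimensional Gaussian integral with positive definite real quadratic part
-- and arbitrary complex linear part.
open scoped MatrixOrder in
lemma gauss_integral {m : ℕ} (M : Matrix (Fin m) (Fin m) ℝ) (hM : M.PosDef) (L : Fin m → ℂ) :
    ∫ W : Fin m → ℝ, Complex.exp (-(Real.pi : ℂ) * ((M *ᵥ W) ⬝ᵥ W : ℝ) + L ⬝ᵥ vc W)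
      = ((Real.sqrt M.det : ℝ) : ℂ)⁻¹ *
          Complex.exp ((mc M⁻¹ *ᵥ L) ⬝ᵥ L / (4 * (Real.pi : ℂ))) := by
  classical
  have hdet : (0 : ℝ) < M.det := hM.det_pos
  set S : Matrix (Fin m) (Fin m) ℝ := CFC.sqrt M with hSdef
  have hS2 : S * S = M := CFC.sqrt_mul_sqrt_self M hM.posSemidef.nonneg
  have hSH : S.IsHermitian := (CFC.sqrt_nonneg M).posSemidef.1
  have hST : Sᵀ = S := by
    have := hSH
    rw [Matrix.IsHermitian] at this
    ext i j
    have := congrFun (congrFun this i) j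
    simpa [Matrix.conjTranspose_apply, Matrix.transpose_apply] using this
  have hdS : S.det ≠ 0 := by
    intro h
    rw [← hS2, Matrix.det_mul, h, mul_zero] at hdet
    exact lt_irrefl _ hdet
  have habs : |S.det| = Real.sqrt M.det := by
    rw [← hS2, Matrix.det_mul, Real.sqrt_mul_self_eq_abs]
  have hSu : IsUnit S.det := hdS.isUnit
  -- the linear coefficient after change of variables
  set ℓ : Fin m → ℂ := mc S⁻¹ *ᵥ L with hldef
  set g : (Fin m → ℝ) → ℂ :=
    fun u => Complex.exp (-(Real.pi : ℂ) * ((u ⬝ᵥ u : ℝ) : ℂ) + ℓ ⬝ᵥ vc u) with hgdef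
  -- step A : the integrand is g ∘ (S *ᵥ ·)
  have hA : ∀ W : Fin m → ℝ,
      Complex.exp (-(Real.pi : ℂ) * ((M *ᵥ W) ⬝ᵥ W : ℝ) + L ⬝ᵥ vc W) = g (S *ᵥ W) := by
    intro W
    have h1 : (S *ᵥ W) ⬝ᵥ (S *ᵥ W) = (M *ᵥ W) ⬝ᵥ W := by
      rw [mdot, hST, Matrix.mulVec_mulVec, hS2]
    have h2 : ℓ ⬝ᵥ vc (S *ᵥ W) = L ⬝ᵥ vc W := by
      rw [vc_mulVec, Matrix.dotProduct_mulVec, ← Matrix.mulVec_transpose, ← mc_transpose, hST,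
        hldef, Matrix.mulVec_mulVec, ← mc_mul, Matrix.mul_nonsing_inv S hSu, mc_one,
        Matrix.one_mulVec]
    rw [hgdef]
    simp only []
    rw [h1, h2]
  simp_rw [hA]
  -- step B : change of variables
  have hg_cont : Continuous g := by
    apply Complex.continuous_exp.comp
    apply Continuous.add
    · apply Continuous.mul continuous_const
      apply Complex.continuous_ofReal.comp
      unfold dotProduct
      exact continuous_finset_sum _ fun i _ => ((continuous_apply i).mul (continuous_apply i))
    · unfold dotProduct
      apply continuous_finset_sum _ fun i _ => ?_
      exact continuous_const.mul (Complex.continuous_ofReal.comp (continuous_apply i))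
  have hmap := Real.map_matrix_volume_pi_eq_smul_volume_pi (M := S) hdS
  have hTmeas : AEMeasurable (⇑(Matrix.toLin' S)) (volume : Measure (Fin m → ℝ)) :=
    (LinearMap.continuous_of_finiteDimensional _).measurable.aemeasurable
  have hint : ∫ W : Fin m → ℝ, g (S *ᵥ W) = |S.det|⁻¹ • ∫ u : Fin m → ℝ, g u := by
    have h1 : ∫ W : Fin m → ℝ, g (S *ᵥ W) = ∫ W : Fin m → ℝ, g (Matrix.toLin' S W) := by
      simp_rw [Matrix.toLin'_apply]
    rw [h1, ← MeasureTheory.integral_map hTmeas hg_cont.aestronglyMeasurable, hmap,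
      MeasureTheory.integral_smul_measure, ENNReal.toReal_ofReal (by positivity)]
    rw [abs_inv]
  rw [hint]
  -- step C-E : compute ∫ g
  have hpi : (Real.pi : ℂ) ≠ 0 := Complex.ofReal_ne_zero.mpr Real.pi_ne_zero
  have hgsplit : ∀ u : Fin m → ℝ,
      g u = ∏ i, Complex.exp (-(Real.pi : ℂ) * (u i : ℂ) ^ 2 + ℓ i * (u i : ℂ)) := by
    intro u
    rw [hgdef]
    simp only []
    rw [← Complex.exp_sum]
    congr 1
    unfold dotProduct vc
    push_cast
    rw [Finset.mul_sum, ← Finset.sum_add_distrib]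
    congr 1; funext i; ring
  simp_rw [hgsplit]
  rw [MeasureTheory.volume_pi, MeasureTheory.integral_fintype_prod_eq_prod (ι := Fin m)
    (fun i (x : ℝ) => Complex.exp (-(Real.pi : ℂ) * (x : ℂ) ^ 2 + ℓ i * (x : ℂ)))]
  have hone : ∀ i : Fin m, (∫ x : ℝ, Complex.exp (-(Real.pi : ℂ) * (x : ℂ) ^ 2 + ℓ i * (x : ℂ)))
      = Complex.exp ((ℓ i) ^ 2 / (4 * (Real.pi : ℂ))) := by
    intro i
    have hb : (-(Real.pi : ℂ)).re < 0 := by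
      simp [Real.pi_pos]
    have := integral_cexp_quadratic hb (ℓ i) 0
    simp only [add_zero] at this
    rw [this]
    rw [neg_neg, div_self hpi, Complex.one_cpow, one_mul]
    congr 1
    field_simp
    ring
  simp_rw [hone]
  rw [← Complex.exp_sum]
  have hsum : (∑ i, (ℓ i) ^ 2 / (4 * (Real.pi : ℂ))) = (mc M⁻¹ *ᵥ L) ⬝ᵥ L / (4 * (Real.pi : ℂ)) := by
    rw [← Finset.sum_div]
    congr 1
    have hll : (∑ i, (ℓ i) ^ 2) = ℓ ⬝ᵥ ℓ := by
      unfold dotProduct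
      congr 1; funext i; ring
    rw [hll, hldef, mdot, ← mc_transpose, Matrix.transpose_nonsing_inv, hST,
      Matrix.mulVec_mulVec, ← mc_mul, ← Matrix.mul_inv_rev, hS2]
  rw [hsum, habs]
  rw [Complex.real_smul, Complex.ofReal_inv]


lemma posDef_smul {m : ℕ} {M : Matrix (Fin m) (Fin m) ℝ} (hM : M.PosDef) {c : ℝ} (hc : 0 < c) :
    (c • M).PosDef := by
  refine Matrix.PosDef.of_dotProduct_mulVec_pos ?_ ?_
  · show (c • M)ᴴ = c • M
    rw [Matrix.conjTranspose_smul, hM.1.eq, star_trivial]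
  · intro x hx
    have h := hM.dotProduct_mulVec_pos hx
    rw [Matrix.smul_mulVec, dotProduct_smul, smul_eq_mul]
    exact mul_pos hc h

/-- the composed kernel (𝒫_t𝒫_0)(Z,Z') equals
det(A_t^0)^{1/2}·exp(-π[⟨Π_0^t(Z-Z'),Z-Z'⟩ + iΩ(Z,Z')]). -/
theorem stmt4 (n : ℕ) (Jt : Matrix (Fin (2*n)) (Fin (2*n)) ℝ) (hJ : Compatible n Jt) :
    ∀ Z Z' : Fin (2*n) → ℝ,
      ∫ W : Fin (2*n) → ℝ, Pker n Jt Z W * Pker n (J0 n) W Z' = PtP0form n Jt Z Z' := by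
  classical
  -- ===== real matrix facts =====
  set B : Matrix (Fin (2*n)) (Fin (2*n)) ℝ := (-(J0 n)) * Jt with hBdef
  set Mh : Matrix (Fin (2*n)) (Fin (2*n)) ℝ := (1/2 : ℝ) • (1 + B) with hMhdef
  set Mp : Matrix (Fin (2*n)) (Fin (2*n)) ℝ := (1/2 : ℝ) • (1 + (-Jt) * J0 n) with hMpdef
  have hJ2 : Jt * Jt = -1 := hJ.1
  have hK2 : J0 n * J0 n = -1 := J0_mul_J0 n
  have hKT : (J0 n)ᵀ = -(J0 n) := J0_transpose n
  have hmat : Jtᵀ * (J0 n * Jt) = J0 n := by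
    apply matrix_ext_dot
    intro u v
    have h := hJ.2.1 u v
    unfold Omega at h
    rw [Matrix.mulVec_mulVec] at h
    have h2 : ((Jtᵀ * (J0 n * Jt)) *ᵥ u) ⬝ᵥ v = ((J0 n * Jt) *ᵥ u) ⬝ᵥ (Jt *ᵥ v) := by
      rw [← Matrix.mulVec_mulVec, mdot, Matrix.transpose_transpose, dotProduct_comm]
    rw [h2, h]
  have hJTK : Jtᵀ * J0 n = -(J0 n * Jt) := by
    have h := congrArg (fun X => X * Jt) hmat
    simp only [mul_assoc, hJ2, mul_neg_one, mul_neg, mul_one] at h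
    rw [← h, neg_neg]
  have hBT : Bᵀ = B := by
    rw [hBdef, Matrix.transpose_mul, Matrix.transpose_neg, hKT, neg_neg, hJTK, neg_mul]
  have hBJ : B * Jt = J0 n := by
    rw [hBdef, mul_assoc, hJ2, mul_neg_one, neg_neg]
  have hKB : J0 n * B = Jt := by
    rw [hBdef, ← mul_assoc, mul_neg, hK2, neg_neg, one_mul]
  have hKJ : J0 n * Jt = -B := by rw [hBdef, neg_mul, neg_neg]
  have hJT : Jtᵀ = (J0 n * Jt) * J0 n := by
    have h : Jtᵀ * J0 n * J0 n = -(J0 n * Jt) * J0 n := by rw [hJTK]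
    rw [mul_assoc, hK2, mul_neg_one, neg_mul] at h
    exact neg_injective h
  have hJTB : Jtᵀ = -(B * J0 n) := by
    rw [hJT, hBdef, neg_mul, neg_mul, neg_neg, mul_assoc]
  -- positive definiteness
  have hBpos : B.PosDef := by
    refine Matrix.PosDef.of_dotProduct_mulVec_pos ?_ ?_
    · show Bᴴ = B
      have hh : Bᴴ = Bᵀ := by
        ext i j; simp [Matrix.conjTranspose_apply, Matrix.transpose_apply]
      rw [hh, hBT]
    · intro x hx
      have h := hJ.2.2 x hx
      unfold Omega at h
      have hh : star x ⬝ᵥ (B *ᵥ x) = (J0 n *ᵥ x) ⬝ᵥ (Jt *ᵥ x) := by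
        rw [star_trivial, hBdef, ← Matrix.mulVec_mulVec, dotProduct_comm,
          mdot, Matrix.transpose_neg, hKT, neg_neg, dotProduct_comm]
      rw [hh]
      exact h
  have hMhpos : Mh.PosDef := by
    rw [hMhdef]
    exact posDef_smul (Matrix.PosDef.add_posSemidef Matrix.PosDef.one hBpos.posSemidef)
      (by norm_num)
  have hdMh : Mh.det ≠ 0 := ne_of_gt hMhpos.det_pos
  have hMA : Mh * Mh⁻¹ = 1 := Matrix.mul_nonsing_inv _ hdMh.isUnit
  have hAM : Mh⁻¹ * Mh = 1 := Matrix.nonsing_inv_mul _ hdMh.isUnit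
  have hMhT : Mhᵀ = Mh := by
    rw [hMhdef, Matrix.transpose_smul, Matrix.transpose_add, Matrix.transpose_one, hBT]
  have hAT : (Mh⁻¹)ᵀ = Mh⁻¹ := by rw [Matrix.transpose_nonsing_inv, hMhT]
  have hMhB : Mh * B = B * Mh := by
    rw [hMhdef, Matrix.smul_mul, Matrix.mul_smul]
    congr 1
    rw [add_mul, mul_add, one_mul, mul_one]
  have hAB : Mh⁻¹ * B = B * Mh⁻¹ := by
    have h1 : Mh⁻¹ * (Mh * B * Mh⁻¹) = Mh⁻¹ * (B * Mh * Mh⁻¹) := by rw [hMhB]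
    rw [mul_assoc Mh B Mh⁻¹, ← mul_assoc Mh⁻¹ Mh _, hAM, one_mul,
      mul_assoc B Mh Mh⁻¹, hMA, mul_one] at h1
    exact h1.symm
  have hMhJ : Mh * Jt = J0 n * Mh := by
    rw [hMhdef, Matrix.smul_mul, Matrix.mul_smul]
    congr 1
    rw [add_mul, one_mul, hBJ, mul_add, mul_one, hKB, add_comm]
  have hJA : Jt * Mh⁻¹ = Mh⁻¹ * J0 n := by
    have h1 : Mh⁻¹ * (Mh * Jt * Mh⁻¹) = Mh⁻¹ * (J0 n * Mh * Mh⁻¹) := by rw [hMhJ]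
    rwa [mul_assoc Mh Jt Mh⁻¹, ← mul_assoc Mh⁻¹ Mh _, hAM, one_mul,
      mul_assoc (J0 n) Mh Mh⁻¹, hMA, mul_one] at h1
  have h2Mh : (1 : Matrix (Fin (2*n)) (Fin (2*n)) ℝ) + B = (2:ℝ) • Mh := by
    rw [hMhdef, smul_smul]; norm_num
  have hNA : ((1 : Matrix (Fin (2*n)) (Fin (2*n)) ℝ) + B) * Mh⁻¹ = (2:ℝ) • 1 := by
    rw [h2Mh, Matrix.smul_mul, hMA]
  -- Mp facts
  have hMpE3 : Jt * B * Jt = Jt * J0 n := by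
    rw [hBdef, neg_mul, mul_neg, neg_mul, ← mul_assoc Jt (J0 n) Jt,
      mul_assoc (Jt * J0 n) Jt Jt, hJ2, mul_neg_one, neg_neg]
  have hMpEq : Jt * Mh * (-Jt) = Mp := by
    rw [hMhdef, hMpdef, Matrix.mul_smul, Matrix.smul_mul]
    congr 1
    rw [mul_add, mul_one, add_mul, mul_neg, mul_neg, ← sub_eq_add_neg, hMpE3, hJ2, neg_neg,
      neg_mul, ← sub_eq_add_neg]
  have hdJt : Jt.det ≠ 0 := by
    intro h
    have h2 : (Jt * Jt).det = 0 := by rw [Matrix.det_mul, h, mul_zero]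
    rw [hJ2] at h2
    have hone : ((-1 : Matrix (Fin (2*n)) (Fin (2*n)) ℝ)).det = 1 := by
      have hh : ((-1 : Matrix (Fin (2*n)) (Fin (2*n)) ℝ)) = (-1 : ℝ) • 1 := by simp
      rw [hh, Matrix.det_smul, Matrix.det_one]
      simp [Even.neg_one_pow (even_two_mul n)]
    rw [hone] at h2
    norm_num at h2
  have hdMp : Mp.det ≠ 0 := by
    rw [← hMpEq, Matrix.det_mul, Matrix.det_mul]
    have hdN : (-Jt).det ≠ 0 := by
      have hh : (-Jt) = (-1 : ℝ) • Jt := by simp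
      rw [hh, Matrix.det_smul]
      simp only [ne_eq, mul_eq_zero, not_or]
      exact ⟨by simp [Even.neg_one_pow (even_two_mul n)], hdJt⟩
    exact mul_ne_zero (mul_ne_zero hdJt hdMh) hdN
  have hApMp : Mp⁻¹ * Mp = 1 := Matrix.nonsing_inv_mul _ hdMp.isUnit
  -- ===== complex matrix facts =====
  set cB : Matrix (Fin (2*n)) (Fin (2*n)) ℂ := mc B with hcB
  set cJ : Matrix (Fin (2*n)) (Fin (2*n)) ℂ := mc Jt with hcJ
  set cK : Matrix (Fin (2*n)) (Fin (2*n)) ℂ := mc (J0 n) with hcK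
  set cA : Matrix (Fin (2*n)) (Fin (2*n)) ℂ := mc (Mh⁻¹) with hcA
  have cC1 : cB * cJ = cK := by rw [hcB, hcJ, hcK, ← mc_mul, hBJ]
  have cC2 : cK * cB = cJ := by rw [hcB, hcJ, hcK, ← mc_mul, hKB]
  have cC3 : cJ * cJ = -1 := by rw [hcJ, ← mc_mul, hJ2, mc_neg, mc_one]
  have cC14 : cK * cJ = -cB := by rw [hcB, hcJ, hcK, ← mc_mul, hKJ, mc_neg]
  have cCAB : cA * cB = cB * cA := by rw [hcA, hcB, ← mc_mul, ← mc_mul, hAB]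
  have cCJA : cJ * cA = cA * cK := by rw [hcA, hcJ, hcK, ← mc_mul, ← mc_mul, hJA]
  have cAT : cAᵀ = cA := by rw [hcA, ← mc_transpose, hAT]
  have cBT : cBᵀ = cB := by rw [hcB, ← mc_transpose, hBT]
  have cKT : cKᵀ = -cK := by rw [hcK, ← mc_transpose, hKT, mc_neg]
  have cJT : cJᵀ = -(cB * cK) := by
    rw [hcJ, hcB, hcK, ← mc_transpose, hJTB, mc_neg, mc_mul]
  have cC7 : ((1 : Matrix (Fin (2*n)) (Fin (2*n)) ℂ) + cB) * cA = (2:ℂ) • 1 := by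
    have h := congrArg mc hNA
    rwa [mc_mul, mc_add, mc_one, mc_smul, mc_one] at h
  -- ===== complex matrix identities =====
  set cP : Matrix (Fin (2*n)) (Fin (2*n)) ℂ := (1/2 : ℂ) • ((cB - Complex.I • cJ) * cA)
    with hcP
  have H_AX : cA * (cB - Complex.I • cK) = (cB - Complex.I • cJ) * cA := by
    rw [mul_sub, sub_mul, mul_smul_comm, smul_mul_assoc, cCAB, ← cCJA]
  have H_AY : cA * (1 + Complex.I • cK) = (1 + Complex.I • cJ) * cA := by
    rw [mul_add, add_mul, mul_one, one_mul, mul_smul_comm, smul_mul_assoc, ← cCJA]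
  have HxT : (cB - Complex.I • cK)ᵀ = cB + Complex.I • cK := by
    rw [Matrix.transpose_sub, Matrix.transpose_smul, cBT, cKT, smul_neg, sub_neg_eq_add]
  have HyT : ((1 : Matrix (Fin (2*n)) (Fin (2*n)) ℂ) + Complex.I • cK)ᵀ
      = 1 - Complex.I • cK := by
    rw [Matrix.transpose_add, Matrix.transpose_smul, Matrix.transpose_one, cKT, smul_neg,
      ← sub_eq_add_neg]
  have hKJA : (cK + cJ) * cA = (2:ℂ) • cK := by
    have h : cK + cJ = cK * (1 + cB) := by rw [mul_add, mul_one, cC2]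
    rw [h, mul_assoc, cC7, mul_smul_comm, mul_one]
  have h4P : (4:ℂ) • cP = (2:ℂ) • ((cB - Complex.I • cJ) * cA) := by
    rw [hcP, smul_smul]; norm_num
  have P1 : (cB + Complex.I • cK) * (cB - Complex.I • cJ)
      = cB*cB - cB + Complex.I • cJ - Complex.I • cK := by
    simp only [mul_sub, add_mul, smul_mul_assoc, mul_smul_comm, smul_smul,
      Complex.I_mul_I, neg_one_smul, cC1, cC2, cC14, smul_neg, neg_neg]
    all_goals first | module | (match_scalars <;> simp [Complex.I_sq])
  have P2 : (cB - Complex.I • cK) * (1 + cB)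
      = cB*cB + cB - Complex.I • cJ - Complex.I • cK := by
    simp only [mul_add, sub_mul, mul_one, smul_mul_assoc, cC2]
    all_goals first | module | (match_scalars <;> simp [Complex.I_sq])
  have H1 : (cB + Complex.I • cK) * ((cB - Complex.I • cJ) * cA)
      = (2:ℂ) • cB - (2*Complex.I) • cK - (4:ℂ) • cP := by
    have e1 : (cB + Complex.I • cK) * ((cB - Complex.I • cJ) * cA)
        = ((cB - Complex.I • cK) * (1 + cB)) * cA
          - (2:ℂ) • ((cB - Complex.I • cJ) * cA) := by
      rw [← mul_assoc, P1, P2]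
      simp only [sub_mul, add_mul, smul_mul_assoc, smul_sub]
      all_goals first | module | (match_scalars <;> simp [Complex.I_sq])
    rw [e1, mul_assoc, cC7, h4P, mul_smul_comm, mul_one]
    simp only [smul_sub, smul_smul]
    all_goals first | module | (match_scalars <;> simp [Complex.I_sq])
  have P3 : ((1 : Matrix (Fin (2*n)) (Fin (2*n)) ℂ) - Complex.I • cK) * (cB - Complex.I • cJ)
      = (2:ℂ) • (cB - Complex.I • cJ) := by
    simp only [sub_mul, mul_sub, one_mul, smul_mul_assoc, mul_smul_comm, smul_smul,
      Complex.I_mul_I, neg_one_smul, neg_neg, cC2, cC14, smul_sub, smul_neg]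
    all_goals first | module | (match_scalars <;> simp [Complex.I_sq])
  have H2 : ((1 : Matrix (Fin (2*n)) (Fin (2*n)) ℂ) - Complex.I • cK)
      * ((cB - Complex.I • cJ) * cA) = (4:ℂ) • cP := by
    rw [← mul_assoc, P3, smul_mul_assoc, hcP, smul_smul]
    norm_num
  have P4 : ((1 : Matrix (Fin (2*n)) (Fin (2*n)) ℂ) - Complex.I • cK) * (1 + cB)
      = 1 + cB - Complex.I • cK - Complex.I • cJ := by
    simp only [sub_mul, mul_add, one_mul, mul_one, smul_mul_assoc, cC2]
    all_goals first | module | (match_scalars <;> simp [Complex.I_sq])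
  have P5 : ((1 : Matrix (Fin (2*n)) (Fin (2*n)) ℂ) - Complex.I • cK)
      * (1 + Complex.I • cJ) = 1 - cB + Complex.I • cJ - Complex.I • cK := by
    simp only [sub_mul, mul_add, one_mul, mul_one, smul_mul_assoc, mul_smul_comm, smul_smul,
      Complex.I_mul_I, neg_one_smul, cC14, smul_neg, neg_neg]
    all_goals first | module | (match_scalars <;> simp [Complex.I_sq])
  have H3 : ((1 : Matrix (Fin (2*n)) (Fin (2*n)) ℂ) - Complex.I • cK)
      * ((1 + Complex.I • cJ) * cA) = (2:ℂ) • 1 - (2*Complex.I) • cK - (4:ℂ) • cP := by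
    have e1 : ((1 : Matrix (Fin (2*n)) (Fin (2*n)) ℂ) - Complex.I • cK)
        * ((1 + Complex.I • cJ) * cA)
        = (((1 : Matrix (Fin (2*n)) (Fin (2*n)) ℂ) - Complex.I • cK) * (1 + cB)) * cA
          - (2:ℂ) • ((cB - Complex.I • cJ) * cA) := by
      rw [← mul_assoc, P5, P4]
      simp only [sub_mul, add_mul, smul_mul_assoc, one_mul, smul_sub]
      all_goals first | module | (match_scalars <;> simp [Complex.I_sq])
    rw [e1, mul_assoc, cC7, h4P, mul_smul_comm, mul_one]
    simp only [smul_sub, smul_smul]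
    all_goals first | module | (match_scalars <;> simp [Complex.I_sq])
  have H2' : (cB + Complex.I • cK) * ((1 + Complex.I • cJ) * cA)
      = (4:ℂ) • cP + (4*Complex.I) • cK := by
    have P7 : (cB + Complex.I • cK) * (1 + Complex.I • cJ)
        = (2:ℂ) • cB + (2*Complex.I) • cK := by
      simp only [add_mul, mul_add, mul_one, one_mul, smul_mul_assoc, mul_smul_comm, smul_smul,
        Complex.I_mul_I, neg_one_smul, cC1, cC14, neg_neg, smul_neg, smul_add]
      all_goals first | module | (match_scalars <;> simp [Complex.I_sq])
    have e1 : ((2:ℂ) • cB + (2*Complex.I) • cK) * cA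
        = (2:ℂ) • ((cB - Complex.I • cJ) * cA) + (2*Complex.I) • ((cK + cJ) * cA) := by
      simp only [add_mul, sub_mul, smul_mul_assoc, smul_sub, smul_add, smul_smul]
      all_goals first | module | (match_scalars <;> simp [Complex.I_sq])
    rw [← mul_assoc, P7, e1, hKJA, h4P, smul_smul,
      show ((2*Complex.I)*2 : ℂ) = 4*Complex.I from by ring]
  have H4 : cPᵀ = cP + Complex.I • cK := by
    have e1 : cPᵀ = (1/2:ℂ) • ((cB + Complex.I • cK) * cA) := by
      rw [hcP, Matrix.transpose_smul, Matrix.transpose_mul, cAT, Matrix.transpose_sub,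
        Matrix.transpose_smul, cBT, cJT, smul_neg, sub_neg_eq_add]
      congr 1
      rw [mul_add, mul_smul_comm, ← mul_assoc cA cB cK, cCAB, mul_assoc cB cA cK, ← cCJA,
        ← mul_assoc cB cJ cA, cC1, add_mul, smul_mul_assoc]
    have e2 : (cB + Complex.I • cK) * cA
        = (cB - Complex.I • cJ) * cA + Complex.I • ((cK + cJ) * cA) := by
      simp only [add_mul, sub_mul, smul_mul_assoc, smul_add]
      all_goals first | module | (match_scalars <;> simp [Complex.I_sq])
    rw [e1, e2, hKJA, smul_add, hcP, smul_smul, smul_smul,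
      show ((1/2:ℂ) * Complex.I * 2) = Complex.I from by ring]
  -- Pi0T = cP
  have hMpC : mc Mp = (1/2:ℂ) • (1 - cJ * cK) := by
    rw [hMpdef, mc_smul, mc_add, mc_one, mc_mul, mc_neg, neg_mul, ← sub_eq_add_neg]
    norm_num
    rfl
  have P6 : ((1 : Matrix (Fin (2*n)) (Fin (2*n)) ℂ) - cJ * cK) * (cB - Complex.I • cJ)
      = (1 - Complex.I • cJ) * (1 + cB) := by
    simp only [sub_mul, mul_sub, mul_add, one_mul, mul_one, smul_mul_assoc, mul_smul_comm,
      mul_assoc, cC2, cC3, cC14, mul_neg, smul_neg, neg_neg, mul_one]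
    all_goals first | module | (match_scalars <;> simp [Complex.I_sq])
  have hMpPi : mc Mp * cP = (1/2 : ℂ) • (1 - Complex.I • cJ) := by
    rw [hMpC, hcP, smul_mul_assoc, mul_smul_comm, smul_smul, ← mul_assoc, P6, mul_assoc,
      cC7, mul_smul_comm, mul_one, smul_smul]
    norm_num
  have hPi0T : Pi0T n Jt = cP := by
    have hApc : mc (Mp⁻¹) * mc Mp = 1 := by rw [← mc_mul, hApMp, mc_one]
    have h1 : Pi0T n Jt = mc (Mp⁻¹) * ((1/2:ℂ) • (1 - Complex.I • cJ)) := rfl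
    rw [h1, ← hMpPi, ← mul_assoc, hApc, one_mul]
  -- ===== the integral computation =====
  intro Z Z'
  set z : Fin (2*n) → ℂ := vc Z with hz
  set z' : Fin (2*n) → ℂ := vc Z' with hz'
  set Xc : Matrix (Fin (2*n)) (Fin (2*n)) ℂ := cB - Complex.I • cK with hXc
  set Yc : Matrix (Fin (2*n)) (Fin (2*n)) ℂ :=
    (1 : Matrix (Fin (2*n)) (Fin (2*n)) ℂ) + Complex.I • cK with hYc
  have hskew : ∀ v : Fin (2*n) → ℂ, (cK *ᵥ v) ⬝ᵥ v = 0 := by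
    intro v
    have h := mdot cK v v
    rw [cKT, Matrix.neg_mulVec, neg_dotProduct] at h
    have h2 : (2:ℂ) * ((cK *ᵥ v) ⬝ᵥ v) = 0 := by linear_combination h
    simpa using h2
  have hanti : (cK *ᵥ z') ⬝ᵥ z = -((cK *ᵥ z) ⬝ᵥ z') := by
    rw [mdot, cKT, Matrix.neg_mulVec, neg_dotProduct]
  have hT1 : (cA *ᵥ (Xc *ᵥ z)) ⬝ᵥ (Xc *ᵥ z)
      = 2*((cB *ᵥ z) ⬝ᵥ z) - 2*Complex.I*((cK *ᵥ z) ⬝ᵥ z) - 4*((cP *ᵥ z) ⬝ᵥ z) := by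
    rw [Matrix.mulVec_mulVec, mdot, Matrix.mulVec_mulVec]
    have hm : (cA * Xc)ᵀ * Xc = (2:ℂ) • cB - (2*Complex.I) • cK - (4:ℂ) • cP := by
      rw [Matrix.transpose_mul, cAT, hXc, HxT, mul_assoc, H_AX, H1]
    rw [hm]
    simp only [Matrix.sub_mulVec, Matrix.smul_mulVec, sub_dotProduct,
      smul_dotProduct, smul_eq_mul]
    all_goals ring
  have hT2 : (cA *ᵥ (Xc *ᵥ z)) ⬝ᵥ (Yc *ᵥ z')
      = 4*((cP *ᵥ z') ⬝ᵥ z) + 4*Complex.I*((cK *ᵥ z') ⬝ᵥ z) := by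
    rw [Matrix.mulVec_mulVec, mdot, Matrix.mulVec_mulVec]
    have hm : (cA * Xc)ᵀ * Yc = (4:ℂ) • cP + (4*Complex.I) • cK := by
      rw [Matrix.transpose_mul, cAT, hXc, HxT, hYc, mul_assoc, H_AY, H2']
    rw [hm]
    simp only [Matrix.add_mulVec, Matrix.smul_mulVec, add_dotProduct,
      smul_dotProduct, smul_eq_mul]
    all_goals ring
  have hT3 : (cA *ᵥ (Yc *ᵥ z')) ⬝ᵥ (Xc *ᵥ z) = 4*((cP *ᵥ z) ⬝ᵥ z') := by
    rw [Matrix.mulVec_mulVec, mdot, Matrix.mulVec_mulVec]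
    have hm : (cA * Yc)ᵀ * Xc = (4:ℂ) • cP := by
      rw [Matrix.transpose_mul, cAT, hYc, HyT, hXc, mul_assoc, H_AX, H2]
    rw [hm]
    simp only [Matrix.smul_mulVec, smul_dotProduct, smul_eq_mul]
    all_goals ring
  have hT4 : (cA *ᵥ (Yc *ᵥ z')) ⬝ᵥ (Yc *ᵥ z')
      = 2*(z' ⬝ᵥ z') - 2*Complex.I*((cK *ᵥ z') ⬝ᵥ z') - 4*((cP *ᵥ z') ⬝ᵥ z') := by
    rw [Matrix.mulVec_mulVec, mdot, Matrix.mulVec_mulVec]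
    have hm : (cA * Yc)ᵀ * Yc = (2:ℂ) • 1 - (2*Complex.I) • cK - (4:ℂ) • cP := by
      rw [Matrix.transpose_mul, cAT, hYc, HyT, mul_assoc, H_AY, H3]
    rw [hm]
    simp only [Matrix.sub_mulVec, Matrix.smul_mulVec, sub_dotProduct,
      smul_dotProduct, smul_eq_mul, Matrix.one_mulVec]
    all_goals ring
  -- the integrand in Gaussian form
  set L : Fin (2*n) → ℂ := (Real.pi : ℂ) • (Xc *ᵥ z + Yc *ᵥ z') with hL
  set c0 : ℂ := -(Real.pi : ℂ)/2 * Complex.ofReal ((B *ᵥ Z) ⬝ᵥ Z)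
      - (Real.pi : ℂ)/2 * Complex.ofReal (Z' ⬝ᵥ Z') with hc0
  have hBK1 : (-(J0 n)) * J0 n = (1 : Matrix (Fin (2*n)) (Fin (2*n)) ℝ) := by
    rw [neg_mul, hK2, neg_neg]
  have hInt : ∀ W : Fin (2*n) → ℝ, Pker n Jt Z W * Pker n (J0 n) W Z'
      = Complex.exp c0 *
        Complex.exp (-(Real.pi : ℂ) * (((Mh *ᵥ W) ⬝ᵥ W : ℝ) : ℂ) + L ⬝ᵥ vc W) := by
    intro W
    unfold Pker
    rw [← Complex.exp_add, ← Complex.exp_add]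
    congr 1
    rw [hBK1, ← hBdef]
    have hr1 : (B *ᵥ (Z - W)) ⬝ᵥ (Z - W)
        = (B *ᵥ Z) ⬝ᵥ Z - 2*((B *ᵥ Z) ⬝ᵥ W) + (B *ᵥ W) ⬝ᵥ W := by
      have hsym : (B *ᵥ W) ⬝ᵥ Z = (B *ᵥ Z) ⬝ᵥ W := by rw [mdot, hBT]
      simp only [Matrix.mulVec_sub, sub_dotProduct, dotProduct_sub, hsym]
      ring
    have hr2 : ((1 : Matrix (Fin (2*n)) (Fin (2*n)) ℝ) *ᵥ (W - Z')) ⬝ᵥ (W - Z')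
        = W ⬝ᵥ W - 2*(Z' ⬝ᵥ W) + Z' ⬝ᵥ Z' := by
      rw [Matrix.one_mulVec]
      have hsym : W ⬝ᵥ Z' = Z' ⬝ᵥ W := dotProduct_comm W Z'
      simp only [sub_dotProduct, dotProduct_sub, hsym]
      ring
    have hw1 : Omega n Z W = (J0 n *ᵥ Z) ⬝ᵥ W := rfl
    have hw2 : Omega n W Z' = -((J0 n *ᵥ Z') ⬝ᵥ W) := by
      unfold Omega
      rw [mdot, hKT, Matrix.neg_mulVec, neg_dotProduct]
    have hq : ((Mh *ᵥ W) ⬝ᵥ W : ℝ) = 1/2*((B *ᵥ W) ⬝ᵥ W) + 1/2*(W ⬝ᵥ W) := by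
      rw [hMhdef]
      simp only [Matrix.smul_mulVec, Matrix.add_mulVec, Matrix.one_mulVec,
        smul_dotProduct, add_dotProduct, smul_eq_mul]
      ring
    have d1 : (cB *ᵥ z) ⬝ᵥ vc W = Complex.ofReal ((B *ᵥ Z) ⬝ᵥ W) := by
      rw [hcB, hz, ← vc_mulVec, ← ofReal_dot]
    have d2 : (cK *ᵥ z) ⬝ᵥ vc W = Complex.ofReal ((J0 n *ᵥ Z) ⬝ᵥ W) := by
      rw [hcK, hz, ← vc_mulVec, ← ofReal_dot]
    have d3 : (cK *ᵥ z') ⬝ᵥ vc W = Complex.ofReal ((J0 n *ᵥ Z') ⬝ᵥ W) := by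
      rw [hcK, hz', ← vc_mulVec, ← ofReal_dot]
    have d4 : z' ⬝ᵥ vc W = Complex.ofReal (Z' ⬝ᵥ W) := by
      rw [hz', ← ofReal_dot]
    have hLW : L ⬝ᵥ vc W = (Real.pi:ℂ) *
        (Complex.ofReal ((B *ᵥ Z) ⬝ᵥ W) + Complex.ofReal (Z' ⬝ᵥ W)
          - Complex.I * Complex.ofReal ((J0 n *ᵥ Z) ⬝ᵥ W)
          + Complex.I * Complex.ofReal ((J0 n *ᵥ Z') ⬝ᵥ W)) := by
      simp only [hL, hXc, hYc, smul_dotProduct, add_dotProduct,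
        Matrix.sub_mulVec, Matrix.add_mulVec, Matrix.smul_mulVec, Matrix.one_mulVec,
        sub_dotProduct, smul_eq_mul, d1, d2, d3, d4]
      ring
    rw [hr1, hr2, hw1, hw2, hq, hLW, hc0]
    push_cast
    ring
  simp_rw [hInt]
  rw [MeasureTheory.integral_const_mul]
  rw [gauss_integral Mh hMhpos L]
  -- ===== final identification =====
  unfold PtP0form
  have hAmat : Amat n (J0 n) Jt = Mh⁻¹ := rfl
  have hdetA : (Mh⁻¹).det = (Mh.det)⁻¹ := by
    rw [Matrix.det_nonsing_inv, Ring.inverse_eq_inv]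
  have hcoef : Complex.ofReal (Real.sqrt ((Amat n (J0 n) Jt).det))
      = ((Real.sqrt Mh.det : ℝ) : ℂ)⁻¹ := by
    rw [hAmat, hdetA, Real.sqrt_inv, Complex.ofReal_inv]
  rw [hcoef, hPi0T]
  have hexp : c0 + (mc Mh⁻¹ *ᵥ L) ⬝ᵥ L / (4 * (Real.pi:ℂ))
      = -(Real.pi:ℂ) * ((cP *ᵥ (vc Z - vc Z')) ⬝ᵥ (vc Z - vc Z')
          + Complex.I * Complex.ofReal (Omega n Z Z')) := by
    have hQ : (mc Mh⁻¹ *ᵥ L) ⬝ᵥ L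
        = (Real.pi:ℂ)^2 * ((cA *ᵥ (Xc *ᵥ z + Yc *ᵥ z')) ⬝ᵥ (Xc *ᵥ z + Yc *ᵥ z')) := by
      rw [← hcA, hL, Matrix.mulVec_smul, smul_dotProduct, dotProduct_smul,
        smul_eq_mul, smul_eq_mul]
      ring
    have hΩc : Complex.ofReal (Omega n Z Z') = (cK *ᵥ z) ⬝ᵥ z' := by
      unfold Omega
      rw [ofReal_dot, hcK, hz, hz', vc_mulVec]
    have hbz : Complex.ofReal ((B *ᵥ Z) ⬝ᵥ Z) = (cB *ᵥ z) ⬝ᵥ z := by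
      rw [ofReal_dot, hcB, hz, vc_mulVec]
    have hzz : Complex.ofReal (Z' ⬝ᵥ Z') = z' ⬝ᵥ z' := by
      rw [ofReal_dot, hz']
    rw [hQ]
    simp only [Matrix.mulVec_add, dotProduct_add, add_dotProduct]
    rw [hT1, hT2, hT3, hT4, hskew z, hskew z', hanti, hΩc,
      show vc Z - vc Z' = z - z' from rfl]
    simp only [Matrix.mulVec_sub, sub_dotProduct, dotProduct_sub]
    rw [hc0, hbz, hzz]
    have hπ : (Real.pi : ℂ) ≠ 0 := Complex.ofReal_ne_zero.mpr Real.pi_ne_zero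
    field_simp
    ring
  rw [← hexp, mul_left_comm, ← Complex.exp_add]


end
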